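/- (Identification in the binary-choice limited-consideration model with large support) Let ν̄ > 0. For i = 1, 2 let Fᵢ : ℝ → ℝ be a nondecreasing continuous function with Fᵢ(ν) = 0 for ν ≤ 0 and Fᵢ(ν) = 1 for ν ≥ ν̄, and let αᵢ ∈ (0, 1]. Let X be a set and c : X → ℝ a function whose range covers the support: [0, ν̄] ⊆ c '' X. If α₁ · F₁(c x) = α₂ · F₂(c x) for every x ∈ X, then α₁ = α₂ and F₁ = F₂. -/
import Mathlib

/-- Identification in the binary-choice limited-consideration model with large support:
if the cutoff `c` covers the whole support `[0, ν̄]` and two configurations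
`(α₁, F₁)`, `(α₂, F₂)` generate the same choice probabilities `α · F(c x)`, then they
coincide. -/
theorem binary_limited_consideration_identified (νbar : ℝ) (hνbar : 0 < νbar)
    (F₁ F₂ : ℝ → ℝ) (hF₁mono : Monotone F₁) (hF₂mono : Monotone F₂)
    (hF₁cont : Continuous F₁) (hF₂cont : Continuous F₂)
    (hF₁0 : ∀ ν, ν ≤ 0 → F₁ ν = 0) (hF₂0 : ∀ ν, ν ≤ 0 → F₂ ν = 0)
    (hF₁1 : ∀ ν, νbar ≤ ν → F₁ ν = 1) (hF₂1 : ∀ ν, νbar ≤ ν → F₂ ν = 1)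
    (α₁ α₂ : ℝ) (hα₁ : 0 < α₁) (hα₁le : α₁ ≤ 1) (hα₂ : 0 < α₂) (hα₂le : α₂ ≤ 1)
    (X : Type*) (c : X → ℝ) (hcov : Set.Icc 0 νbar ⊆ Set.range c)
    (hobs : ∀ x : X, α₁ * F₁ (c x) = α₂ * F₂ (c x)) :
    α₁ = α₂ ∧ F₁ = F₂ := by
  have key : ∀ t ∈ Set.Icc (0:ℝ) νbar, α₁ * F₁ t = α₂ * F₂ t := by
    intro t ht
    obtain ⟨x, hx⟩ := hcov ht
    simpa [hx] using hobs x
  have hαeq : α₁ = α₂ := by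
    have := key νbar ⟨hνbar.le, le_rfl⟩
    simpa [hF₁1 νbar le_rfl, hF₂1 νbar le_rfl] using this
  refine ⟨hαeq, funext fun ν => ?_⟩
  rcases le_or_gt ν 0 with h | h
  · rw [hF₁0 ν h, hF₂0 ν h]
  rcases le_or_gt νbar ν with h' | h'
  · rw [hF₁1 ν h', hF₂1 ν h']
  · have := key ν ⟨h.le, h'.le⟩
    rw [hαeq] at this
    exact mul_left_cancel₀ hα₂.ne' this
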